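/- Let f be a quasiperiodically forced circle homeomorphism over an irrational ω with lift F, and fix ε > 0. Let A ≺ B be minimal F-invariant strips with no F-invariant strip S satisfying A ≺ S ≺ B, and let C := {(θ,x) ∈ T¹×ℝ : φ⁺_A(θ) < x < φ⁻_B(θ)}. Assume F restricted to C is topologically transitive (for all nonempty open U, V ⊆ C there exists n ∈ ℤ with F^n(U) ∩ V ≠ ∅). Then for every θ₀ ∈ T¹ and every x₀ > φ⁺_A(θ₀) there exists k ∈ ℕ with (F_ε)^k_{θ₀}(x₀) > φ⁺_B(θ₀ + kω). -/

import Mathlib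

open Filter Topology MeasureTheory
open scoped ENNReal

noncomputable section

/-- The circle `T¹ = ℝ/ℤ`. -/
abbrev T1 := AddCircle (1 : ℝ)

/-- Fiberwise iterate of the skew product: `fiberIter ω F n θ x = F^n_θ(x)`. -/
def fiberIter (ω : ℝ) (F : T1 → ℝ → ℝ) : ℕ → T1 → ℝ → ℝ
  | 0, _, x => x
  | n + 1, θ, x => fiberIter ω F n (θ + (ω : T1)) (F θ x)

/-- `F` is (the fiber part of) a lift of a quasiperiodically forced circle homeomorphism
over `ω`: `F(θ,x) = (θ+ω, F_θ(x))`, each `F_θ` a strictly increasing homeomorphism of `ℝ`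
commuting with `x ↦ x+1`. -/
structure IsQpfLift (ω : ℝ) (F : T1 → ℝ → ℝ) : Prop where
  cont : Continuous fun p : T1 × ℝ => F p.1 p.2
  mono : ∀ θ, StrictMono (F θ)
  surj : ∀ θ, Function.Surjective (F θ)
  per  : ∀ θ x, F θ (x + 1) = F θ x + 1

/-- `ρ` is the fibered rotation number of the lift `F`. -/
def HasRotNum (ω : ℝ) (F : T1 → ℝ → ℝ) (ρ : ℝ) : Prop :=
  ∀ θ x, Tendsto (fun n : ℕ => (fiberIter ω F n θ x - x) / n) atTop (𝓝 ρ)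

/-- The skew-product map on `T¹ × ℝ` induced by the (fiber part of the) lift. -/
def skew (ω : ℝ) (F : T1 → ℝ → ℝ) : T1 × ℝ → T1 × ℝ :=
  fun p => (p.1 + (ω : T1), F p.1 p.2)

/-- An `F`-invariant strip: a compact invariant set all of whose fibers are nonempty
compact intervals. -/
def IsInvStrip (ω : ℝ) (F : T1 → ℝ → ℝ) (A : Set (T1 × ℝ)) : Prop :=
  IsCompact A ∧ skew ω F '' A = A ∧
    ∀ θ : T1, ∃ a b : ℝ, a ≤ b ∧ {x : ℝ | (θ, x) ∈ A} = Set.Icc a b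

/-- Upper bounding graph `φ⁺_A(θ) = sup A_θ`. -/
def phiSup (A : Set (T1 × ℝ)) (θ : T1) : ℝ := sSup {x : ℝ | (θ, x) ∈ A}

/-- Lower bounding graph `φ⁻_A(θ) = inf A_θ`. -/
def phiInf (A : Set (T1 × ℝ)) (θ : T1) : ℝ := sInf {x : ℝ | (θ, x) ∈ A}

/-- `A ≺ B`: the strip `A` lies strictly below the strip `B`. -/
def StripLt (A B : Set (T1 × ℝ)) : Prop := ∀ θ, phiSup A θ < phiInf B θ

/-- A minimal invariant strip: one not strictly containing another invariant strip. -/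
def IsMinimalStrip (ω : ℝ) (F : T1 → ℝ → ℝ) (A : Set (T1 × ℝ)) : Prop :=
  IsInvStrip ω F A ∧ ∀ S : Set (T1 × ℝ), IsInvStrip ω F S → S ⊆ A → S = A

namespace Climb

variable {ω : ℝ} {F G G₁ G₂ : T1 → ℝ → ℝ}

lemma fiberIter_zero (θ : T1) (x : ℝ) : fiberIter ω F 0 θ x = x := rfl

lemma fiberIter_succ (n : ℕ) (θ : T1) (x : ℝ) :
    fiberIter ω F (n + 1) θ x = fiberIter ω F n (θ + (ω : T1)) (F θ x) := rfl

lemma fiberIter_succ' (n : ℕ) (θ : T1) (x : ℝ) :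
    fiberIter ω F (n + 1) θ x = F (θ + n • ((ω : T1))) (fiberIter ω F n θ x) := by
  induction n generalizing θ x with
  | zero => simp [fiberIter]
  | succ n ih =>
      have h : (θ + (ω : T1)) + n • ((ω : T1)) = θ + (n + 1) • ((ω : T1)) := by
        rw [succ_nsmul]; abel
      rw [fiberIter_succ, ih, h, fiberIter_succ]

lemma fiberIter_add (m n : ℕ) (θ : T1) (x : ℝ) :
    fiberIter ω F (m + n) θ x = fiberIter ω F n (θ + m • ((ω : T1))) (fiberIter ω F m θ x) := by
  induction m generalizing θ x with
  | zero => simp [fiberIter]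
  | succ m ih =>
      have : m + 1 + n = (m + n) + 1 := by omega
      rw [this, fiberIter_succ, fiberIter_succ, ih]
      congr 1
      rw [succ_nsmul]
      abel

lemma fiberIter_le_fiberIter (h₂ : ∀ θ, Monotone (G₂ θ)) (hle : ∀ θ x, G₁ θ x ≤ G₂ θ x)
    (n : ℕ) (θ : T1) {x y : ℝ} (hxy : x ≤ y) :
    fiberIter ω G₁ n θ x ≤ fiberIter ω G₂ n θ y := by
  induction n generalizing θ x y with
  | zero => exact hxy
  | succ n ih =>
      rw [fiberIter_succ, fiberIter_succ]
      exact ih _ ((hle θ x).trans (h₂ θ hxy))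

lemma fiberIter_mono (h : ∀ θ, Monotone (G θ)) (n : ℕ) (θ : T1) :
    Monotone (fiberIter ω G n θ) := fun _ _ hxy => fiberIter_le_fiberIter h (fun _ _ => le_rfl) n θ hxy

lemma fiberIter_strictMono (hF : IsQpfLift ω F) (n : ℕ) (θ : T1) :
    StrictMono (fiberIter ω F n θ) := by
  induction n generalizing θ with
  | zero => exact fun a b h => h
  | succ n ih => exact fun a b h => ih (θ + (ω : T1)) (hF.mono θ h)

lemma fiberIter_surj (hF : IsQpfLift ω F) (n : ℕ) (θ : T1) :
    Function.Surjective (fiberIter ω F n θ) := by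
  induction n generalizing θ with
  | zero => exact fun y => ⟨y, rfl⟩
  | succ n ih =>
      intro y
      obtain ⟨z, hz⟩ := ih (θ + (ω : T1)) y
      obtain ⟨w, hw⟩ := hF.surj θ z
      exact ⟨w, by rw [fiberIter_succ, hw, hz]⟩

lemma skew_iterate (n : ℕ) (p : T1 × ℝ) :
    (skew ω F)^[n] p = (p.1 + n • ((ω : T1)), fiberIter ω F n p.1 p.2) := by
  induction n generalizing p with
  | zero => simp [fiberIter]
  | succ n ih =>
      rw [Function.iterate_succ_apply, ih]
      simp only [skew, fiberIter_succ]
      have h : p.1 + (ω : T1) + n • ((ω : T1)) = p.1 + (n + 1) • ((ω : T1)) := by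
        rw [succ_nsmul]; abel
      rw [h]

lemma skew_continuous (hF : IsQpfLift ω F) : Continuous (skew ω F) :=
  (continuous_fst.add continuous_const).prodMk hF.cont

lemma skew_injective (hF : IsQpfLift ω F) : Function.Injective (skew ω F) := by
  rintro ⟨a, x⟩ ⟨b, y⟩ h
  simp only [skew, Prod.mk.injEq] at h
  obtain ⟨h1, h2⟩ := h
  have hab : a = b := by exact add_right_cancel h1
  subst hab
  exact Prod.ext rfl ((hF.mono a).injective h2)

lemma qpf_eps (hF : IsQpfLift ω F) (ε : ℝ) : IsQpfLift ω (fun θ x => F θ x + ε) where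
  cont := hF.cont.add continuous_const
  mono := fun θ a b h => by simpa using hF.mono θ h
  surj := fun θ y => by
    obtain ⟨x, hx⟩ := hF.surj θ (y - ε)
    exact ⟨x, by show F θ x + ε = y; rw [hx]; ring⟩
  per := fun θ x => by simp [hF.per, add_right_comm]


/-! ### Fibers of compact sets -/

def fib (K : Set (T1 × ℝ)) (θ : T1) : Set ℝ := {x : ℝ | (θ, x) ∈ K}

variable {K : Set (T1 × ℝ)}

lemma fib_isClosed (hK : IsClosed K) (θ : T1) : IsClosed (fib K θ) :=
  hK.preimage (Continuous.prodMk_right θ)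

lemma fib_bddAbove (hK : IsCompact K) (θ : T1) : BddAbove (fib K θ) := by
  obtain ⟨R, hR⟩ := (hK.image continuous_snd).isBounded.subset_closedBall 0
  refine ⟨R, fun x hx => ?_⟩
  have h2 := hR ⟨(θ, x), hx, rfl⟩
  simp only [Metric.mem_closedBall, Real.dist_eq, sub_zero] at h2
  exact (abs_le.1 h2).2

lemma fib_bddBelow (hK : IsCompact K) (θ : T1) : BddBelow (fib K θ) := by
  obtain ⟨R, hR⟩ := (hK.image continuous_snd).isBounded.subset_closedBall 0
  refine ⟨-R, fun x hx => ?_⟩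
  have := hR ⟨(θ, x), hx, rfl⟩
  simp only [Metric.mem_closedBall, Real.dist_eq, sub_zero] at this
  linarith [abs_le.1 this |>.1]

lemma fib_isCompact (hK : IsCompact K) (θ : T1) : IsCompact (fib K θ) := by
  rcases Set.eq_empty_or_nonempty (fib K θ) with h | h
  · simp [h]
  · exact Metric.isCompact_of_isClosed_isBounded (fib_isClosed hK.isClosed θ)
      ((Metric.isBounded_iff_subset_closedBall 0).2 (by
        obtain ⟨R, hR⟩ := (hK.image continuous_snd).isBounded.subset_closedBall 0
        exact ⟨R, fun x hx => hR ⟨(θ, x), hx, rfl⟩⟩))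

lemma sSup_fib_mem (hK : IsCompact K) {θ : T1} (hne : (fib K θ).Nonempty) :
    (θ, sSup (fib K θ)) ∈ K :=
  (fib_isCompact hK θ).sSup_mem hne

lemma sInf_fib_mem (hK : IsCompact K) {θ : T1} (hne : (fib K θ).Nonempty) :
    (θ, sInf (fib K θ)) ∈ K :=
  (fib_isCompact hK θ).sInf_mem hne

lemma le_sSup_fib (hK : IsCompact K) {θ : T1} {x : ℝ} (hx : (θ, x) ∈ K) :
    x ≤ sSup (fib K θ) := le_csSup (fib_bddAbove hK θ) hx

lemma sInf_fib_le (hK : IsCompact K) {θ : T1} {x : ℝ} (hx : (θ, x) ∈ K) :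
    sInf (fib K θ) ≤ x := csInf_le (fib_bddBelow hK θ) hx

lemma isClosed_le_sSup_fib (hK : IsCompact K) (hne : ∀ θ, (fib K θ).Nonempty) (c : ℝ) :
    IsClosed {θ : T1 | c ≤ sSup (fib K θ)} := by
  have : {θ : T1 | c ≤ sSup (fib K θ)} = Prod.fst '' (K ∩ {p : T1 × ℝ | c ≤ p.2}) := by
    ext θ
    constructor
    · intro h
      exact ⟨(θ, sSup (fib K θ)), ⟨sSup_fib_mem hK (hne θ), h⟩, rfl⟩
    · rintro ⟨p, ⟨hpK, hpc⟩, rfl⟩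
      exact le_trans hpc (le_sSup_fib hK hpK)
  rw [this]
  exact ((hK.inter_right (isClosed_le continuous_const continuous_snd)).image
    continuous_fst).isClosed

lemma isClosed_sInf_fib_le (hK : IsCompact K) (hne : ∀ θ, (fib K θ).Nonempty) (c : ℝ) :
    IsClosed {θ : T1 | sInf (fib K θ) ≤ c} := by
  have : {θ : T1 | sInf (fib K θ) ≤ c} = Prod.fst '' (K ∩ {p : T1 × ℝ | p.2 ≤ c}) := by
    ext θ
    constructor
    · intro h
      exact ⟨(θ, sInf (fib K θ)), ⟨sInf_fib_mem hK (hne θ), h⟩, rfl⟩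
    · rintro ⟨p, ⟨hpK, hpc⟩, rfl⟩
      exact le_trans (sInf_fib_le hK hpK) hpc
  rw [this]
  exact ((hK.inter_right (isClosed_le continuous_snd continuous_const)).image
    continuous_fst).isClosed

lemma isOpen_sSup_fib_lt (hK : IsCompact K) (hne : ∀ θ, (fib K θ).Nonempty) :
    IsOpen {p : T1 × ℝ | sSup (fib K p.1) < p.2} := by
  rw [isOpen_iff_forall_mem_open]
  rintro ⟨θ, x⟩ (hp : sSup (fib K θ) < x)
  obtain ⟨c, hc1, hc2⟩ := exists_between hp
  refine ⟨{θ' : T1 | sSup (fib K θ') < c} ×ˢ Set.Ioi c, ?_, ?_, ⟨hc1, hc2⟩⟩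
  · rintro ⟨θ', x'⟩ ⟨h1, h2⟩
    exact lt_trans (show sSup (fib K θ') < c from h1) (show c < x' from h2)
  · have h1 : IsOpen {θ' : T1 | sSup (fib K θ') < c} := by
      have h2 : {θ' : T1 | sSup (fib K θ') < c} = {θ' : T1 | c ≤ sSup (fib K θ')}ᶜ := by
        ext θ'; simp [not_le]
      rw [h2]; exact (isClosed_le_sSup_fib hK hne c).isOpen_compl
    exact h1.prod isOpen_Ioi

lemma isOpen_lt_sInf_fib (hK : IsCompact K) (hne : ∀ θ, (fib K θ).Nonempty) :
    IsOpen {p : T1 × ℝ | p.2 < sInf (fib K p.1)} := by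
  rw [isOpen_iff_forall_mem_open]
  rintro ⟨θ, x⟩ (hp : x < sInf (fib K θ))
  obtain ⟨c, hc1, hc2⟩ := exists_between hp
  refine ⟨{θ' : T1 | c < sInf (fib K θ')} ×ˢ Set.Iio c, ?_, ?_, ⟨hc2, hc1⟩⟩
  · rintro ⟨θ', x'⟩ ⟨h1, h2⟩
    have h1' : c < sInf (fib K θ') := h1
    have h2' : x' < c := h2
    exact lt_trans h2' h1'
  · have h1 : IsOpen {θ' : T1 | c < sInf (fib K θ')} := by
      have h2 : {θ' : T1 | c < sInf (fib K θ')} = {θ' : T1 | sInf (fib K θ') ≤ c}ᶜ := by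
        ext θ'; simp [not_le]
      rw [h2]; exact (isClosed_sInf_fib_le hK hne c).isOpen_compl
    exact h1.prod isOpen_Iio


/-! ### Strip lemmas -/

variable {A : Set (T1 × ℝ)}

lemma Icc_endpoints {a b c d : ℝ} (hab : a ≤ b) (h : Set.Icc a b = Set.Icc c d) :
    a = c ∧ b = d := by
  have hcd : c ≤ d := by
    rcases Set.nonempty_Icc.2 hab with ⟨x, hx⟩
    have : x ∈ Set.Icc c d := h ▸ hx
    exact le_trans this.1 this.2
  have h1 : a ∈ Set.Icc c d := h ▸ Set.mem_Icc.2 ⟨le_refl a, hab⟩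
  have h2 : b ∈ Set.Icc c d := h ▸ Set.mem_Icc.2 ⟨hab, le_refl b⟩
  have h3 : c ∈ Set.Icc a b := h.symm ▸ Set.mem_Icc.2 ⟨le_refl c, hcd⟩
  have h4 : d ∈ Set.Icc a b := h.symm ▸ Set.mem_Icc.2 ⟨hcd, le_refl d⟩
  exact ⟨le_antisymm h3.1 h1.1, le_antisymm h2.2 h4.2⟩

lemma strip_fib_eq (hA : IsInvStrip ω F A) (θ : T1) :
    fib A θ = Set.Icc (phiInf A θ) (phiSup A θ) := by
  obtain ⟨a, b, hab, hfib⟩ := hA.2.2 θ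
  have h1 : fib A θ = Set.Icc a b := hfib
  have h2 : phiInf A θ = a := by
    show sInf {x : ℝ | (θ, x) ∈ A} = a
    rw [show {x : ℝ | (θ, x) ∈ A} = Set.Icc a b from hfib, csInf_Icc hab]
  have h3 : phiSup A θ = b := by
    show sSup {x : ℝ | (θ, x) ∈ A} = b
    rw [show {x : ℝ | (θ, x) ∈ A} = Set.Icc a b from hfib, csSup_Icc hab]
  rw [h1, h2, h3]

lemma phiInf_le_phiSup (hA : IsInvStrip ω F A) (θ : T1) : phiInf A θ ≤ phiSup A θ := by
  obtain ⟨a, b, hab, hfib⟩ := hA.2.2 θ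
  have h2 : phiInf A θ = a := by
    show sInf {x : ℝ | (θ, x) ∈ A} = a
    rw [hfib]; exact csInf_Icc hab
  have h3 : phiSup A θ = b := by
    show sSup {x : ℝ | (θ, x) ∈ A} = b
    rw [hfib]; exact csSup_Icc hab
  rw [h2, h3]; exact hab

lemma mem_strip_iff (hA : IsInvStrip ω F A) {θ : T1} {x : ℝ} :
    (θ, x) ∈ A ↔ phiInf A θ ≤ x ∧ x ≤ phiSup A θ := by
  have h := strip_fib_eq hA θ
  constructor
  · intro hx
    have : x ∈ fib A θ := hx
    rw [h] at this
    exact this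
  · intro hx
    have : x ∈ fib A θ := by rw [h]; exact hx
    exact this

lemma strip_fib_nonempty (hA : IsInvStrip ω F A) (θ : T1) : (fib A θ).Nonempty := by
  rw [strip_fib_eq hA θ]
  exact Set.nonempty_Icc.2 (phiInf_le_phiSup hA θ)

lemma phiSup_mem (hA : IsInvStrip ω F A) (θ : T1) : (θ, phiSup A θ) ∈ A :=
  (mem_strip_iff hA).2 ⟨phiInf_le_phiSup hA θ, le_refl _⟩

lemma phiInf_mem (hA : IsInvStrip ω F A) (θ : T1) : (θ, phiInf A θ) ∈ A :=
  (mem_strip_iff hA).2 ⟨le_refl _, phiInf_le_phiSup hA θ⟩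

lemma fib_image_of_invariant (hinv : skew ω F '' A = A) (θ : T1) :
    F θ '' fib A θ = fib A (θ + (ω : T1)) := by
  ext y
  constructor
  · rintro ⟨x, hx, rfl⟩
    have : skew ω F (θ, x) ∈ A := by
      rw [← hinv]; exact ⟨(θ, x), hx, rfl⟩
    exact this
  · intro hy
    have : (θ + (ω : T1), y) ∈ skew ω F '' A := by rw [hinv]; exact hy
    obtain ⟨⟨θ', x⟩, hpA, hp⟩ := this
    simp only [skew, Prod.mk.injEq] at hp
    have hθ : θ' = θ := add_right_cancel hp.1
    subst hθ
    exact ⟨x, hpA, hp.2⟩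

lemma mono_surj_image_Icc {f : ℝ → ℝ} (hf : StrictMono f) (hs : Function.Surjective f)
    {a b : ℝ} (hab : a ≤ b) : f '' Set.Icc a b = Set.Icc (f a) (f b) := by
  ext y
  constructor
  · rintro ⟨x, hx, rfl⟩
    exact ⟨hf.monotone hx.1, hf.monotone hx.2⟩
  · intro hy
    obtain ⟨x, rfl⟩ := hs y
    exact ⟨x, ⟨(hf.le_iff_le).1 hy.1, (hf.le_iff_le).1 hy.2⟩, rfl⟩

lemma phiBoundary_invariant (hF : IsQpfLift ω F) (hA : IsInvStrip ω F A) (θ : T1) :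
    F θ (phiInf A θ) = phiInf A (θ + (ω : T1)) ∧
      F θ (phiSup A θ) = phiSup A (θ + (ω : T1)) := by
  have h1 := fib_image_of_invariant hA.2.1 θ
  rw [strip_fib_eq hA θ, strip_fib_eq hA (θ + (ω : T1)),
    mono_surj_image_Icc (hF.mono θ) (hF.surj θ) (phiInf_le_phiSup hA θ)] at h1
  exact Icc_endpoints ((hF.mono θ).monotone (phiInf_le_phiSup hA θ)) h1

lemma phiSup_invariant (hF : IsQpfLift ω F) (hA : IsInvStrip ω F A) (θ : T1) :
    F θ (phiSup A θ) = phiSup A (θ + (ω : T1)) := (phiBoundary_invariant hF hA θ).2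

lemma phiInf_invariant (hF : IsQpfLift ω F) (hA : IsInvStrip ω F A) (θ : T1) :
    F θ (phiInf A θ) = phiInf A (θ + (ω : T1)) := (phiBoundary_invariant hF hA θ).1

lemma strip_bound (hA : IsInvStrip ω F A) : ∃ R : ℝ, 0 < R ∧ ∀ p ∈ A, |p.2| ≤ R := by
  obtain ⟨R, hR⟩ := (hA.1.image continuous_snd).isBounded.subset_closedBall 0
  refine ⟨max R 1, lt_of_lt_of_le one_pos (le_max_right _ _), fun p hp => ?_⟩
  have h2 := hR ⟨p, hp, rfl⟩
  simp only [Metric.mem_closedBall, Real.dist_eq, sub_zero] at h2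
  exact le_trans h2 (le_max_left _ _)


/-! ### Density of forward orbits of the irrational rotation -/

lemma norm_coe_le_abs_sub_int (x : ℝ) (z : ℤ) : ‖(x : T1)‖ ≤ |x - z| := by
  have h : ‖(x : UnitAddCircle)‖ = |x - round x| := UnitAddCircle.norm_eq
  calc ‖(x : T1)‖ = |x - round x| := h
  _ ≤ |x - z| := round_le x z

lemma coe_int_eq_zero (z : ℤ) : ((z : ℝ) : T1) = 0 := by
  rw [AddCircle.coe_eq_zero_iff]
  exact ⟨z, by simp⟩

lemma walk_helper {e δ : ℝ} (he : 0 < e) (hed : e < δ) (t : ℝ) (N : ℕ) :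
    ∃ (l : ℕ) (z : ℤ), N ≤ l ∧ |l * e - (t + z)| < δ := by
  obtain ⟨z, hz⟩ := exists_int_ge (N * e + δ - t)
  set T : ℝ := t + z with hT
  have hT1 : N * e + δ ≤ T := by
    have : (N : ℝ) * e + δ - t ≤ z := hz
    linarith
  set L : ℤ := ⌊(T - δ) / e⌋ + 1 with hL
  have hL1 : (T - δ) / e < (L : ℝ) := by
    rw [hL]; push_cast
    exact Int.lt_floor_add_one _
  have hL2 : ((L : ℝ) - 1) ≤ (T - δ) / e := by
    rw [hL]; push_cast
    simpa using Int.floor_le ((T - δ) / e)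
  have hNe : (N : ℝ) ≤ (T - δ) / e := by
    rw [le_div_iff₀ he]
    linarith
  have hNL : (N : ℤ) < L := by
    have : (N : ℝ) < (L : ℝ) := lt_of_le_of_lt hNe hL1
    exact_mod_cast this
  have hLnonneg : 0 ≤ L := le_trans (Int.ofNat_nonneg N) hNL.le
  refine ⟨L.toNat, z, ?_, ?_⟩
  · have : (N : ℤ) ≤ L := hNL.le
    omega
  · have hcast : ((L.toNat : ℕ) : ℝ) = (L : ℝ) := by
      exact_mod_cast congrArg (fun n : ℤ => (n : ℝ)) (Int.toNat_of_nonneg hLnonneg)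
    rw [hcast]
    have h1 : T - δ < (L : ℝ) * e := by
      rw [div_lt_iff₀ he] at hL1
      linarith
    have h2 : (L : ℝ) * e ≤ T - δ + e := by
      rw [le_div_iff₀ he] at hL2
      nlinarith
    have h3 : (L : ℝ) * e < T + δ := by nlinarith
    rw [abs_lt]
    constructor <;> [linarith; linarith]

lemma small_step (hω : Irrational ω) {δ : ℝ} (hδ : 0 < δ) :
    ∃ m : ℕ, 1 ≤ m ∧ m • ((ω : T1)) ≠ 0 ∧ ‖m • ((ω : T1))‖ < δ := by
  obtain ⟨a, -, φ, hφ, hconv⟩ := isCompact_univ.tendsto_subseq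
    (x := fun n : ℕ => (n • ((ω : T1)) : T1)) (fun n => Set.mem_univ _)
  obtain ⟨N, hN⟩ := Metric.tendsto_atTop.1 hconv (δ / 2) (by positivity)
  have hij : φ N < φ (N + 1) := hφ (Nat.lt_succ_self N)
  set m : ℕ := φ (N + 1) - φ N with hm
  have hm1 : 1 ≤ m := by omega
  have hsplit : φ N + m = φ (N + 1) := by omega
  have hsmul : (φ (N + 1)) • ((ω : T1)) = (φ N) • ((ω : T1)) + m • ((ω : T1)) := by
    rw [← hsplit, add_nsmul]
  have hdist : ‖m • ((ω : T1))‖ < δ := by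
    have h1 := hN N (le_refl N)
    have h2 := hN (N + 1) (Nat.le_succ N)
    have h3 : dist ((φ (N + 1)) • ((ω : T1))) ((φ N) • ((ω : T1))) < δ := by
      calc dist ((φ (N + 1)) • ((ω : T1))) ((φ N) • ((ω : T1)))
          ≤ dist ((φ (N + 1)) • ((ω : T1))) a + dist ((φ N) • ((ω : T1))) a :=
            dist_triangle_right _ _ _
        _ < δ / 2 + δ / 2 := by
            have h2' : dist ((fun n : ℕ => (n • ((ω : T1)) : T1)) (φ (N + 1))) a < δ / 2 := h2
            have h1' : dist ((fun n : ℕ => (n • ((ω : T1)) : T1)) (φ N)) a < δ / 2 := h1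
            exact add_lt_add h2' h1'
        _ = δ := by ring
    rw [dist_eq_norm, hsmul] at h3
    simpa using h3
  refine ⟨m, hm1, ?_, hdist⟩
  intro h0
  have : ((((m : ℕ) • ω : ℝ)) : T1) = 0 := by
    rw [AddCircle.coe_nsmul]
    exact h0
  rw [AddCircle.coe_eq_zero_iff] at this
  obtain ⟨z, hzz⟩ := this
  have hzz' : (z : ℝ) = m * ω := by
    have : (z : ℝ) * 1 = (m : ℕ) • ω := by
      rw [← hzz]; simp [zsmul_eq_mul]
    simpa [nsmul_eq_mul] using this
  have hm0 : (m : ℝ) ≠ 0 := by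
    have : (0 : ℕ) < m := by omega
    exact_mod_cast Nat.pos_iff_ne_zero.1 this
  have hωrat : ω = (z : ℝ) / m := by
    rw [eq_div_iff hm0, hzz']; ring
  exact hω ⟨(z : ℚ) / (m : ℚ), by push_cast; rw [hωrat]⟩

lemma orbit_dense (hω : Irrational ω) (θs : T1) {O : Set T1} (hO : IsOpen O)
    (hne : O.Nonempty) (N₀ : ℕ) : ∃ k : ℕ, N₀ ≤ k ∧ θs + k • ((ω : T1)) ∈ O := by
  obtain ⟨x, hx⟩ := hne
  obtain ⟨δ, hδ, hball⟩ := Metric.isOpen_iff.1 hO x hx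
  obtain ⟨m, hm1, hmne, hmlt⟩ := small_step hω (show (0 : ℝ) < δ / 2 by positivity)
  -- lift of the small step
  set r : ℝ := (m : ℕ) • ω with hr
  set e : ℝ := r - round r with he
  have hrcoe : ((r : ℝ) : T1) = m • ((ω : T1)) := by
    rw [hr, AddCircle.coe_nsmul]
  have hecoe : ((e : ℝ) : T1) = m • ((ω : T1)) := by
    rw [he, AddCircle.coe_sub, hrcoe, coe_int_eq_zero, sub_zero]
  have heabs : |e| < δ / 2 := by
    have : ‖((r : ℝ) : T1)‖ = |r - round r| := UnitAddCircle.norm_eq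
    rw [hrcoe] at this
    rw [he, ← this]
    exact hmlt
  have hene : e ≠ 0 := by
    intro h0
    apply hmne
    rw [← hecoe, h0]
    simp
  -- lift of the target
  obtain ⟨t, ht⟩ := QuotientAddGroup.mk_surjective (x - θs)
  have ht' : ((t : ℝ) : T1) = x - θs := ht
  -- the walk
  have hkey : ∃ (l : ℕ) (z : ℤ), N₀ ≤ l ∧ |l * e - (t + z)| < δ / 2 := by
    rcases lt_or_gt_of_ne hene with hneg | hpos
    · obtain ⟨l, z, hl, hlz⟩ := walk_helper (e := -e) (δ := δ / 2)
        (by linarith) (by linarith [abs_lt.1 heabs]) (-t) N₀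
      refine ⟨l, -z, hl, ?_⟩
      have : |-(l * e - (t + (-z : ℤ)))| < δ / 2 := by
        convert hlz using 2
        push_cast
        ring
      rwa [abs_neg] at this
    · obtain ⟨l, z, hl, hlz⟩ := walk_helper (e := e) (δ := δ / 2)
        hpos (lt_of_le_of_lt (le_abs_self e) heabs) t N₀
      exact ⟨l, z, hl, hlz⟩
  obtain ⟨l, z, hl, hlz⟩ := hkey
  refine ⟨l * m, le_trans hl (Nat.le_mul_of_pos_right l (by omega)), ?_⟩
  apply hball
  have hsm : (l * m) • ((ω : T1)) = ((l * e : ℝ) : T1) := by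
    rw [mul_comm l m, mul_nsmul, ← hecoe, ← AddCircle.coe_nsmul]
    congr 1
    simp [nsmul_eq_mul]
  have : dist (θs + (l * m) • ((ω : T1))) x = ‖((l * e - t : ℝ) : T1)‖ := by
    rw [dist_eq_norm]
    congr 1
    rw [AddCircle.coe_sub, hsm, ht']
    abel
  rw [Metric.mem_ball, this]
  calc ‖((l * e - t : ℝ) : T1)‖ ≤ |l * e - t - z| := norm_coe_le_abs_sub_int _ _
  _ = |l * e - (t + z)| := by ring_nf
  _ < δ / 2 := hlz
  _ < δ := by linarith



/-! ### Baire: simultaneous continuity points of usc functions -/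

lemma usc_interior_bad_empty (φ : T1 → ℝ) {q r : ℝ} (hqr : q < r) :
    interior ({θ : T1 | r ≤ φ θ} ∩ closure {θ : T1 | φ θ ≤ q}) = ∅ := by
  by_contra h
  obtain ⟨θ, hθ⟩ := Set.nonempty_iff_ne_empty.2 h
  have hopen : IsOpen (interior ({θ : T1 | r ≤ φ θ} ∩ closure {θ : T1 | φ θ ≤ q})) :=
    isOpen_interior
  have hsub := interior_subset
    (s := {θ : T1 | r ≤ φ θ} ∩ closure {θ : T1 | φ θ ≤ q})
  have hdisj : interior ({θ : T1 | r ≤ φ θ} ∩ closure {θ : T1 | φ θ ≤ q}) ∩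
      {θ : T1 | φ θ ≤ q} = ∅ := by
    ext θ'
    simp only [Set.mem_inter_iff, Set.mem_empty_iff_false, iff_false, not_and]
    intro h1 h2
    have := (hsub h1).1
    have : r ≤ φ θ' := this
    have : φ θ' ≤ q := h2
    linarith [(hsub h1).1, h2]
  have := hopen.inter_closure (t := {θ : T1 | φ θ ≤ q})
    ⟨hθ, (hsub hθ).2⟩
  rw [hdisj] at this
  simpa using this

lemma exists_cont_pt (φs : Fin 3 → T1 → ℝ)
    (hφ : ∀ i (c : ℝ), IsClosed {θ : T1 | c ≤ φs i θ}) :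
    ∃ θc : T1, ∀ i, ∀ η > 0, ∃ O : Set T1, IsOpen O ∧ θc ∈ O ∧
      ∀ θ ∈ O, |φs i θ - φs i θc| < η := by
  classical
  set bad : Fin 3 × ℚ × ℚ → Set T1 := fun iqr =>
    if (iqr.2.1 : ℝ) < (iqr.2.2 : ℝ) then
      {θ : T1 | (iqr.2.2 : ℝ) ≤ φs iqr.1 θ} ∩ closure {θ : T1 | φs iqr.1 θ ≤ (iqr.2.1 : ℝ)}
    else ∅ with hbad
  have hopen : ∀ iqr, IsOpen (bad iqr)ᶜ := by
    intro iqr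
    simp only [hbad]
    split_ifs with h
    · exact ((hφ iqr.1 _).inter isClosed_closure).isOpen_compl
    · simp
  have hdense : ∀ iqr, Dense (bad iqr)ᶜ := by
    intro iqr
    simp only [hbad]
    split_ifs with h
    · exact interior_eq_empty_iff_dense_compl.1 (usc_interior_bad_empty (φs iqr.1) h)
    · simp [dense_univ]
  have hGdense : Dense (⋂ iqr, (bad iqr)ᶜ) := dense_iInter_of_isOpen hopen hdense
  obtain ⟨θc, hθc⟩ := hGdense.nonempty
  refine ⟨θc, fun i η hη => ?_⟩
  have hnotbad : ∀ q r : ℚ, (q : ℝ) < (r : ℝ) →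
      ¬(((r : ℝ) ≤ φs i θc) ∧ θc ∈ closure {θ : T1 | φs i θ ≤ (q : ℝ)}) := by
    intro q r hqr hcon
    have h1 : θc ∈ (bad (i, q, r))ᶜ := by
      have := Set.mem_iInter.1 hθc (i, q, r)
      exact this
    apply h1
    simp only [hbad]
    rw [if_pos hqr]
    exact ⟨hcon.1, hcon.2⟩
  -- choose rationals  φθc - η < q < r < φθc... careful: need r ≤ φ θc
  obtain ⟨r, hr1, hr2⟩ := exists_rat_btwn (show φs i θc - η / 2 < φs i θc by linarith)
  obtain ⟨q, hq1, hq2⟩ := exists_rat_btwn hr1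
  have hqr : (q : ℝ) < (r : ℝ) := hq2
  have hlower := hnotbad q r hqr
  have h2 : ¬ θc ∈ closure {θ : T1 | φs i θ ≤ (q : ℝ)} := by
    intro hmem
    exact hlower ⟨hr2.le, hmem⟩
  set O1 : Set T1 := (closure {θ : T1 | φs i θ ≤ (q : ℝ)})ᶜ with hO1
  set O2 : Set T1 := {θ : T1 | φs i θc + η ≤ φs i θ}ᶜ with hO2
  refine ⟨O1 ∩ O2, (isClosed_closure.isOpen_compl).inter (hφ i _).isOpen_compl,
    ⟨h2, by simp [hO2]; linarith⟩, ?_⟩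
  rintro θ ⟨hθ1, hθ2⟩
  have hl : (q : ℝ) < φs i θ := by
    by_contra hcon
    exact hθ1 (subset_closure (by simpa using not_lt.1 hcon))
  have hu : φs i θ < φs i θc + η := by
    have : ¬ (φs i θc + η ≤ φs i θ) := hθ2
    linarith
  rw [abs_lt]
  constructor <;> [linarith; linarith]


/-! ### Limit sets of orbits -/

def limset (o : ℕ → T1 × ℝ) : Set (T1 × ℝ) := ⋂ N : ℕ, closure (o '' Set.Ici N)

variable {o : ℕ → T1 × ℝ} {lo hi : ℝ}

lemma tail_closure_subset (hb : ∀ k, (o k).2 ∈ Set.Icc lo hi) (N : ℕ) :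
    closure (o '' Set.Ici N) ⊆ (Set.univ : Set T1) ×ˢ Set.Icc lo hi := by
  apply closure_minimal
  · rintro p ⟨k, -, rfl⟩
    exact ⟨Set.mem_univ _, hb k⟩
  · exact isClosed_univ.prod isClosed_Icc

lemma tail_closure_isCompact (hb : ∀ k, (o k).2 ∈ Set.Icc lo hi) (N : ℕ) :
    IsCompact (closure (o '' Set.Ici N)) :=
  IsCompact.of_isClosed_subset (isCompact_univ.prod isCompact_Icc) isClosed_closure
    (tail_closure_subset hb N)

lemma limset_isCompact (hb : ∀ k, (o k).2 ∈ Set.Icc lo hi) : IsCompact (limset o) :=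
  IsCompact.of_isClosed_subset (tail_closure_isCompact hb 0)
    (isClosed_iInter fun _ => isClosed_closure)
    (Set.iInter_subset _ 0)

lemma limset_subset (N : ℕ) : limset o ⊆ closure (o '' Set.Ici N) :=
  Set.iInter_subset _ N

lemma limset_visits {p : T1 × ℝ} (hp : p ∈ limset o) {O : Set (T1 × ℝ)} (hO : IsOpen O)
    (hpO : p ∈ O) (N : ℕ) : ∃ k, N ≤ k ∧ o k ∈ O := by
  have h1 : p ∈ closure (o '' Set.Ici N) := limset_subset N hp
  have h2 := (mem_closure_iff.1 h1) O hO hpO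
  obtain ⟨q, hq1, k, hk, rfl⟩ := h2
  exact ⟨k, hk, hq1⟩

lemma limset_maps {g : T1 × ℝ → T1 × ℝ} (hg : Continuous g)
    (ho : ∀ k, o (k + 1) = g (o k)) {p : T1 × ℝ} (hp : p ∈ limset o) : g p ∈ limset o := by
  apply Set.mem_iInter.2
  intro N
  have h1 : p ∈ closure (o '' Set.Ici N) := limset_subset N hp
  have h2 : g p ∈ closure (g '' (o '' Set.Ici N)) :=
    (image_closure_subset_closure_image hg) ⟨p, h1, rfl⟩
  have h3 : g '' (o '' Set.Ici N) ⊆ o '' Set.Ici N := by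
    rintro q ⟨q', ⟨k, hk, rfl⟩, rfl⟩
    exact ⟨k + 1, le_trans hk (Nat.le_succ k), ho k⟩
  exact closure_mono h3 h2

lemma limset_subset_closed {S : Set (T1 × ℝ)} (hS : IsClosed S) {N : ℕ}
    (h : ∀ k, N ≤ k → o k ∈ S) : limset o ⊆ S := by
  refine (limset_subset N).trans ?_
  apply closure_minimal ?_ hS
  rintro p ⟨k, hk, rfl⟩
  exact h k hk

lemma limset_fib_nonempty (hω : Irrational ω) (hb : ∀ k, (o k).2 ∈ Set.Icc lo hi)
    {θs : T1} (hfst : ∀ k, (o k).1 = θs + k • ((ω : T1))) (θ : T1) :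
    (fib (limset o) θ).Nonempty := by
  have key : ∀ N : ℕ, (fib (closure (o '' Set.Ici N)) θ).Nonempty := by
    intro N
    set P : Set T1 := Prod.fst '' closure (o '' Set.Ici N) with hP
    have hPc : IsClosed P := ((tail_closure_isCompact hb N).image continuous_fst).isClosed
    have hPuniv : P = Set.univ := by
      by_contra hne
      have hcne : Pᶜ.Nonempty := by
        rw [Set.nonempty_compl]; exact hne
      obtain ⟨k, hk, hkmem⟩ := orbit_dense hω θs hPc.isOpen_compl hcne N
      exact hkmem ⟨o k, subset_closure ⟨k, hk, rfl⟩, hfst k⟩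
    have hθP : θ ∈ P := hPuniv ▸ Set.mem_univ θ
    obtain ⟨p, hp, hp1⟩ := hθP
    refine ⟨p.2, ?_⟩
    have : (θ, p.2) ∈ closure (o '' Set.Ici N) := by
      rw [← hp1]
      exact hp
    exact this
  have hnest : ∀ N, fib (closure (o '' Set.Ici (N + 1))) θ ⊆ fib (closure (o '' Set.Ici N)) θ := by
    intro N x hx
    exact closure_mono (Set.image_mono (Set.Ici_subset_Ici.2 (Nat.le_succ N))) hx
  have hcpt : IsCompact (fib (closure (o '' Set.Ici 0)) θ) :=
    fib_isCompact (tail_closure_isCompact hb 0) θ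
  have hcl : ∀ N, IsClosed (fib (closure (o '' Set.Ici N)) θ) :=
    fun N => fib_isClosed isClosed_closure θ
  obtain ⟨x, hx⟩ := IsCompact.nonempty_iInter_of_sequence_nonempty_isCompact_isClosed
    (fun N => fib (closure (o '' Set.Ici N)) θ) hnest key hcpt hcl
  refine ⟨x, ?_⟩
  have h2 : ∀ N, (θ, x) ∈ closure (o '' Set.Ici N) := fun N => Set.mem_iInter.1 hx N
  exact Set.mem_iInter.2 h2


/-! ### The maximal invariant strip inside a forward invariant region -/

lemma fiberIter_fix {g : T1 → ℝ} (hg : ∀ θ, F θ (g θ) = g (θ + (ω : T1))) :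
    ∀ (n : ℕ) (θ : T1), fiberIter ω F n θ (g θ) = g (θ + n • ((ω : T1))) := by
  intro n
  induction n with
  | zero => intro θ; simp [fiberIter]
  | succ n ih =>
      intro θ
      rw [fiberIter_succ, hg, ih (θ + (ω : T1))]
      congr 1
      rw [succ_nsmul]
      abel

lemma fiberIter_fix_le {g : T1 → ℝ} (hF : IsQpfLift ω F)
    (hg : ∀ θ, F θ (g θ) ≤ g (θ + (ω : T1))) :
    ∀ (n : ℕ) (θ : T1), fiberIter ω F n θ (g θ) ≤ g (θ + n • ((ω : T1))) := by
  intro n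
  induction n with
  | zero => intro θ; simp [fiberIter]
  | succ n ih =>
      intro θ
      rw [fiberIter_succ]
      calc fiberIter ω F n (θ + (ω : T1)) (F θ (g θ))
          ≤ fiberIter ω F n (θ + (ω : T1)) (g (θ + (ω : T1))) :=
            fiberIter_mono (fun θ' => (hF.mono θ').monotone) n _ (hg θ)
        _ ≤ g (θ + (ω : T1) + n • ((ω : T1))) := ih (θ + (ω : T1))
        _ = g (θ + (n + 1) • ((ω : T1))) := by
            congr 1; rw [succ_nsmul]; abel

lemma invStrip_of_region (hF : IsQpfLift ω F) (glo ghi : T1 → ℝ)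
    (hle : ∀ θ, glo θ ≤ ghi θ)
    (hR : IsCompact {p : T1 × ℝ | glo p.1 ≤ p.2 ∧ p.2 ≤ ghi p.1})
    (hglo : ∀ θ, F θ (glo θ) = glo (θ + (ω : T1)))
    (hghi : ∀ θ, F θ (ghi θ) ≤ ghi (θ + (ω : T1))) :
    ∃ S : Set (T1 × ℝ), IsInvStrip ω F S ∧
      S ⊆ {p : T1 × ℝ | glo p.1 ≤ p.2 ∧ p.2 ≤ ghi p.1} ∧
      ∀ θ : T1, phiSup S (θ + (ω : T1)) ≤ F θ (ghi θ) := by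
  set R : Set (T1 × ℝ) := {p : T1 × ℝ | glo p.1 ≤ p.2 ∧ p.2 ≤ ghi p.1} with hRdef
  set b : ℕ → T1 → ℝ := fun n θ => fiberIter ω F n (θ - n • ((ω : T1))) (ghi (θ - n • ((ω : T1)))) with hb
  -- basic facts
  have hRfib : ∀ θ, fib R θ = Set.Icc (glo θ) (ghi θ) := by
    intro θ; ext x; simp [hRdef, fib, Set.mem_Icc]
  have hRinv : ∀ p ∈ R, skew ω F p ∈ R := by
    rintro ⟨θ, x⟩ ⟨h1, h2⟩
    constructor
    · show glo (θ + ((ω : T1))) ≤ F θ x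
      rw [← hglo θ]
      exact (hF.mono θ).monotone h1
    · show F θ x ≤ ghi (θ + ((ω : T1)))
      exact le_trans ((hF.mono θ).monotone h2) (hghi θ)
  have hfib_image : ∀ (n : ℕ) (θ : T1),
      fib ((skew ω F)^[n] '' R) θ = (fun x => fiberIter ω F n (θ - n • ((ω : T1))) x) '' fib R (θ - n • ((ω : T1))) := by
    intro n θ
    ext x
    constructor
    · rintro ⟨p, hpR, hp⟩
      rw [skew_iterate] at hp
      have h1 : p.1 + n • ((ω : T1)) = θ := congrArg Prod.fst hp
      have h2 : fiberIter ω F n p.1 p.2 = x := congrArg Prod.snd hp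
      have h3 : p.1 = θ - n • ((ω : T1)) := by rw [← h1]; abel
      refine ⟨p.2, ?_, ?_⟩
      · show (θ - n • ((ω : T1)), p.2) ∈ R
        rw [← h3]
        exact hpR
      · rw [← h3]; exact h2
    · rintro ⟨y, hy, rfl⟩
      refine ⟨(θ - n • ((ω : T1)), y), hy, ?_⟩
      rw [skew_iterate]
      have : θ - n • ((ω : T1)) + n • ((ω : T1)) = θ := by abel
      rw [this]
  have hblo : ∀ (n : ℕ) (θ : T1), glo θ ≤ b n θ := by
    intro n θ
    have h1 : fiberIter ω F n (θ - n • ((ω : T1))) (glo (θ - n • ((ω : T1)))) = glo θ := by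
      rw [fiberIter_fix hglo]
      congr 1
      abel
    rw [hb, ← h1]
    exact fiberIter_mono (fun θ' => (hF.mono θ').monotone) n _ (hle _)
  have hfib_Icc : ∀ (n : ℕ) (θ : T1),
      fib ((skew ω F)^[n] '' R) θ = Set.Icc (glo θ) (b n θ) := by
    intro n θ
    rw [hfib_image n θ, hRfib]
    rw [mono_surj_image_Icc (fiberIter_strictMono hF n _) (fiberIter_surj hF n _) (hle _)]
    have h1 : fiberIter ω F n (θ - n • ((ω : T1))) (glo (θ - n • ((ω : T1)))) = glo θ := by
      rw [fiberIter_fix hglo]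
      congr 1
      abel
    rw [h1]
  set S : Set (T1 × ℝ) := ⋂ n : ℕ, (skew ω F)^[n] '' R with hSdef
  have hS0 : S ⊆ R := by
    intro p hp
    have := Set.mem_iInter.1 hp 0
    simpa using this
  have hnested : ∀ n : ℕ, (skew ω F)^[n + 1] '' R ⊆ (skew ω F)^[n] '' R := by
    intro n
    rw [Function.iterate_succ, Set.image_comp]
    exact Set.image_mono (by rintro p ⟨q, hq, rfl⟩; exact hRinv q hq)
  have hSfib : ∀ θ, fib S θ = Set.Icc (glo θ) (⨅ n : ℕ, b n θ) := by
    intro θ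
    have hbdd : BddBelow (Set.range fun n : ℕ => b n θ) := ⟨glo θ, by rintro y ⟨n, rfl⟩; exact hblo n θ⟩
    ext x
    constructor
    · intro hx
      have hx' : ∀ n : ℕ, x ∈ fib ((skew ω F)^[n] '' R) θ := by
        intro n
        exact Set.mem_iInter.1 hx n
      have h1 : glo θ ≤ x := by
        have := hx' 0
        rw [hfib_Icc 0 θ] at this
        exact this.1
      refine ⟨h1, ?_⟩
      apply le_ciInf
      intro n
      have := hx' n
      rw [hfib_Icc n θ] at this
      exact this.2
    · rintro ⟨h1, h2⟩
      apply Set.mem_iInter.2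
      intro n
      have : x ∈ fib ((skew ω F)^[n] '' R) θ := by
        rw [hfib_Icc n θ]
        exact ⟨h1, le_trans h2 (ciInf_le hbdd n)⟩
      exact this
  have hglo_le_iInf : ∀ θ, glo θ ≤ ⨅ n : ℕ, b n θ := fun θ => le_ciInf fun n => hblo n θ
  have hScompact : IsCompact S := by
    apply IsCompact.of_isClosed_subset hR
    · apply isClosed_iInter
      intro n
      exact ((hR.image ((skew_continuous hF).iterate n)).isClosed)
    · exact hS0
  have hSinv : skew ω F '' S = S := by
    apply Set.Subset.antisymm
    · rintro p ⟨q, hq, rfl⟩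
      apply Set.mem_iInter.2
      intro n
      rcases n with _ | n
      · simpa using (hRinv q (hS0 hq))
      · have hqn : q ∈ (skew ω F)^[n] '' R := Set.mem_iInter.1 hq n
        rw [Function.iterate_succ', Set.image_comp]
        exact ⟨q, hqn, rfl⟩
    · intro p hp
      -- p has preimages at every level; they agree by injectivity
      have h1 : p ∈ (skew ω F)^[1] '' R := Set.mem_iInter.1 hp 1
      obtain ⟨q0, hq0, hq0p⟩ : ∃ q, q ∈ R ∧ skew ω F q = p := by
        obtain ⟨q, hq, hqp⟩ := h1
        exact ⟨q, by simpa using hq, by simpa using hqp⟩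
      refine ⟨q0, ?_, hq0p⟩
      apply Set.mem_iInter.2
      intro n
      have hn1 : p ∈ (skew ω F)^[n + 1] '' R := Set.mem_iInter.1 hp (n + 1)
      rw [Function.iterate_succ', Set.image_comp] at hn1
      obtain ⟨q, hq, hqp⟩ := hn1
      have : q = q0 := skew_injective hF (by rw [hqp, hq0p])
      rw [← this]
      exact hq
  refine ⟨S, ⟨hScompact, hSinv, ?_⟩, hS0, ?_⟩
  · intro θ
    exact ⟨glo θ, ⨅ n : ℕ, b n θ, hglo_le_iInf θ, hSfib θ⟩
  · intro θ
    have h1 : phiSup S (θ + ((ω : T1))) = ⨅ n : ℕ, b n (θ + ((ω : T1))) := by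
      show sSup {x : ℝ | (θ + ((ω : T1)), x) ∈ S} = _
      have := hSfib (θ + ((ω : T1)))
      rw [show {x : ℝ | (θ + ((ω : T1)), x) ∈ S} = fib S (θ + ((ω : T1))) from rfl, this]
      exact csSup_Icc (hglo_le_iInf (θ + ((ω : T1))))
    rw [h1]
    have hbdd : BddBelow (Set.range fun n : ℕ => b n (θ + ((ω : T1)))) :=
      ⟨glo (θ + ((ω : T1))), by rintro y ⟨n, rfl⟩; exact hblo n (θ + ((ω : T1)))⟩
    calc (⨅ n : ℕ, b n (θ + ((ω : T1)))) ≤ b 1 (θ + ((ω : T1))) := ciInf_le hbdd 1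
    _ = F θ (ghi θ) := by
        simp only [hb]
        rw [show (θ + ((ω : T1))) - (1 : ℕ) • ((ω : T1)) = θ by simp]
        rfl


/-! ### No orbit of the perturbed system can stay inside the minimal strip B forever -/

lemma no_trapped_orbit (hω : Irrational ω) (hF : IsQpfLift ω F) {ε : ℝ} (hε : 0 < ε)
    {B : Set (T1 × ℝ)} (hB : IsMinimalStrip ω F B)
    {o : ℕ → T1 × ℝ} {θs : T1}
    (hfst : ∀ k, (o k).1 = θs + k • ((ω : T1)))
    (hstep : ∀ k, o (k + 1) = skew ω (fun θ x => F θ x + ε) (o k))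
    (hin : ∀ k, o k ∈ B) : False := by
  have hFε : IsQpfLift ω (fun θ x => F θ x + ε) := qpf_eps hF ε
  obtain ⟨R, hRpos, hRbd⟩ := strip_bound hB.1
  have hb : ∀ k, (o k).2 ∈ Set.Icc (-R) R := fun k => abs_le.1 (hRbd _ (hin k))
  set Ω : Set (T1 × ℝ) := limset o with hΩdef
  have hΩcpt : IsCompact Ω := limset_isCompact hb
  have hΩB : Ω ⊆ B := limset_subset_closed hB.1.1.isClosed (N := 0) (fun k _ => hin k)
  have hΩne : ∀ θ, (fib Ω θ).Nonempty := limset_fib_nonempty hω hb hfst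
  have hΩmaps : ∀ p ∈ Ω, skew ω (fun θ x => F θ x + ε) p ∈ Ω :=
    fun p hp => limset_maps (skew_continuous hFε) hstep hp
  set h : T1 → ℝ := fun θ => sSup (fib Ω θ) with hh
  have hmemh : ∀ θ, (θ, h θ) ∈ Ω := fun θ => sSup_fib_mem hΩcpt (hΩne θ)
  have hlo_le_h : ∀ θ, phiInf B θ ≤ h θ := by
    intro θ
    obtain ⟨y, hy⟩ := hΩne θ
    have h1 : (θ, y) ∈ B := hΩB hy
    have h2 : phiInf B θ ≤ y := ((mem_strip_iff hB.1).1 h1).1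
    exact le_trans h2 (le_sSup_fib hΩcpt hy)
  have hh_le_sup : ∀ θ, h θ ≤ phiSup B θ := by
    intro θ
    exact ((mem_strip_iff hB.1).1 (hΩB (hmemh θ))).2
  have hsub : ∀ θ, F θ (h θ) + ε ≤ h (θ + (ω : T1)) := by
    intro θ
    have h1 := hΩmaps _ (hmemh θ)
    exact le_sSup_fib hΩcpt h1
  -- the region
  set R₀ : Set (T1 × ℝ) := {p : T1 × ℝ | phiInf B p.1 ≤ p.2 ∧ p.2 ≤ h p.1} with hR₀
  have hR₀cpt : IsCompact R₀ := by
    have hclosed : IsClosed R₀ := by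
      have h1 : IsClosed {p : T1 × ℝ | phiInf B p.1 ≤ p.2} := by
        have := (isOpen_lt_sInf_fib hB.1.1 (strip_fib_nonempty hB.1)).isClosed_compl
        have heq : {p : T1 × ℝ | p.2 < sInf (fib B p.1)}ᶜ = {p : T1 × ℝ | phiInf B p.1 ≤ p.2} := by
          ext p; simp [not_lt]; rfl
        rwa [heq] at this
      have h2 : IsClosed {p : T1 × ℝ | p.2 ≤ h p.1} := by
        have := (isOpen_sSup_fib_lt hΩcpt hΩne).isClosed_compl
        have heq : {p : T1 × ℝ | sSup (fib Ω p.1) < p.2}ᶜ = {p : T1 × ℝ | p.2 ≤ h p.1} := by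
          ext p; simp [not_lt, hh]
        rwa [heq] at this
      exact h1.inter h2
    apply IsCompact.of_isClosed_subset (isCompact_univ.prod isCompact_Icc) hclosed
    rintro ⟨θ, x⟩ ⟨h1, h2⟩
    refine ⟨Set.mem_univ _, ?_, ?_⟩
    · exact le_trans (abs_le.1 (hRbd _ (phiInf_mem hB.1 θ))).1 h1
    · exact le_trans h2 (le_trans (hh_le_sup θ) (abs_le.1 (hRbd _ (phiSup_mem hB.1 θ))).2)
  obtain ⟨S, hSstrip, hSsub, hStop⟩ := invStrip_of_region hF (fun θ => phiInf B θ) h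
    hlo_le_h hR₀cpt (fun θ => phiInf_invariant hF hB.1 θ)
    (fun θ => by linarith [hsub θ])
  have hSB : S ⊆ B := by
    intro p hp
    obtain ⟨h1, h2⟩ := hSsub hp
    have : (p.1, p.2) ∈ B :=
      (mem_strip_iff hB.1).2 ⟨h1, le_trans h2 (hh_le_sup p.1)⟩
    simpa using this
  have hSeqB : S = B := hB.2 S hSstrip hSB
  have hcontr := hStop θs
  rw [hSeqB] at hcontr
  have h1 : phiSup B (θs + (ω : T1)) ≤ h (θs + (ω : T1)) - ε := by
    have := hsub θs
    linarith
  have h2 : h (θs + (ω : T1)) ≤ phiSup B (θs + (ω : T1)) := hh_le_sup _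
  linarith


/-! ### From two-sided transitivity to forward reachability -/

lemma rec_return (hF : IsQpfLift ω F) {C : Set (T1 × ℝ)}
    (htrans : ∀ U V : Set (T1 × ℝ), IsOpen U → IsOpen V → U.Nonempty → V.Nonempty →
      U ⊆ C → V ⊆ C → ∃ n : ℕ,
        (((skew ω F)^[n] '' U) ∩ V).Nonempty ∨ (((skew ω F)^[n] ⁻¹' U) ∩ V).Nonempty)
    {O : Set (T1 × ℝ)} (hO : IsOpen O) (hOne : O.Nonempty) (hOC : O ⊆ C) :
    ∃ n : ℕ, 1 ≤ n ∧ ∃ p ∈ O, (skew ω F)^[n] p ∈ O := by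
  obtain ⟨p, hp⟩ := hOne
  obtain ⟨W₁, W₂, hW₁, hW₂, hpW₁, hpW₂, hWsub⟩ := isOpen_prod_iff.1 hO p.1 p.2 (by
    simpa using hp)
  obtain ⟨r, hr, hball⟩ := Metric.isOpen_iff.1 hW₂ p.2 hpW₂
  have hIoo1 : Set.Ioo (p.2 - r) p.2 ⊆ W₂ := by
    intro x hx
    apply hball
    rw [Metric.mem_ball, Real.dist_eq, abs_lt]
    constructor <;> [linarith [hx.1, hx.2]; linarith [hx.1, hx.2]]
  have hIoo2 : Set.Ioo p.2 (p.2 + r) ⊆ W₂ := by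
    intro x hx
    apply hball
    rw [Metric.mem_ball, Real.dist_eq, abs_lt]
    constructor <;> [linarith [hx.1, hx.2]; linarith [hx.1, hx.2]]
  set O₁ : Set (T1 × ℝ) := W₁ ×ˢ Set.Ioo (p.2 - r) p.2 with hO₁
  set O₂ : Set (T1 × ℝ) := W₁ ×ˢ Set.Ioo p.2 (p.2 + r) with hO₂
  have hO₁sub : O₁ ⊆ O := fun q hq => hWsub ⟨hq.1, hIoo1 hq.2⟩
  have hO₂sub : O₂ ⊆ O := fun q hq => hWsub ⟨hq.1, hIoo2 hq.2⟩
  have hdisj : O₁ ∩ O₂ = ∅ := by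
    rw [Set.eq_empty_iff_forall_notMem]
    rintro q ⟨h1, h2⟩
    have a1 : q.2 < p.2 := h1.2.2
    have a2 : p.2 < q.2 := h2.2.1
    linarith

  obtain ⟨n, hn⟩ := htrans O₁ O₂ (hW₁.prod isOpen_Ioo) (hW₁.prod isOpen_Ioo)
    ⟨(p.1, p.2 - r / 2), by
      refine ⟨hpW₁, ?_⟩
      simp only [Set.mem_Ioo]
      constructor <;> linarith⟩
    ⟨(p.1, p.2 + r / 2), by
      refine ⟨hpW₁, ?_⟩
      simp only [Set.mem_Ioo]
      constructor <;> linarith⟩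
    (hO₁sub.trans hOC) (hO₂sub.trans hOC)
  have hn0 : n ≠ 0 := by
    rintro rfl
    rcases hn with ⟨q, hq1, hq2⟩ | ⟨q, hq1, hq2⟩
    · simp only [Function.iterate_zero, Set.image_id] at hq1
      have : q ∈ O₁ ∩ O₂ := ⟨hq1, hq2⟩
      rw [hdisj] at this
      exact this
    · simp only [Function.iterate_zero, Set.preimage_id] at hq1
      have : q ∈ O₁ ∩ O₂ := ⟨hq1, hq2⟩
      rw [hdisj] at this
      exact this
  rcases hn with ⟨q, ⟨q', hq', rfl⟩, hq2⟩ | ⟨q, hq1, hq2⟩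
  · exact ⟨n, by omega, q', hO₁sub hq', hO₂sub hq2⟩
  · exact ⟨n, by omega, q, hO₂sub hq2, hO₁sub hq1⟩

lemma chain_return (hF : IsQpfLift ω F) {C : Set (T1 × ℝ)}
    (htrans : ∀ U V : Set (T1 × ℝ), IsOpen U → IsOpen V → U.Nonempty → V.Nonempty →
      U ⊆ C → V ⊆ C → ∃ n : ℕ,
        (((skew ω F)^[n] '' U) ∩ V).Nonempty ∨ (((skew ω F)^[n] ⁻¹' U) ∩ V).Nonempty)
    (m : ℕ) :
    ∀ W : Set (T1 × ℝ), IsOpen W → W.Nonempty → W ⊆ C →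
      ∃ N : ℕ, m ≤ N ∧ ∃ w ∈ W, (skew ω F)^[N] w ∈ W := by
  induction m with
  | zero =>
      intro W hW hWne hWC
      obtain ⟨w, hw⟩ := hWne
      exact ⟨0, le_refl 0, w, hw, by simpa using hw⟩
  | succ m ih =>
      intro W hW hWne hWC
      obtain ⟨N, hN, w, hwW, hwN⟩ := ih W hW hWne hWC
      set W' : Set (T1 × ℝ) := W ∩ (skew ω F)^[N] ⁻¹' W with hW'
      have hW'open : IsOpen W' := hW.inter (((skew_continuous hF).iterate N).isOpen_preimage W hW)
      have hW'ne : W'.Nonempty := ⟨w, hwW, hwN⟩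
      have hW'C : W' ⊆ C := fun q hq => hWC hq.1
      obtain ⟨n, hn1, w', hw'W', hw'n⟩ := rec_return hF htrans hW'open hW'ne hW'C
      refine ⟨N + n, by omega, w', hw'W'.1, ?_⟩
      have h1 : (skew ω F)^[n] w' ∈ W' := hw'n
      have h2 : (skew ω F)^[N] ((skew ω F)^[n] w') ∈ W := h1.2
      rw [← Function.iterate_add_apply] at h2
      exact h2

lemma trans_up (hF : IsQpfLift ω F) {C : Set (T1 × ℝ)}
    (htrans : ∀ U V : Set (T1 × ℝ), IsOpen U → IsOpen V → U.Nonempty → V.Nonempty →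
      U ⊆ C → V ⊆ C → ∃ n : ℕ,
        (((skew ω F)^[n] '' U) ∩ V).Nonempty ∨ (((skew ω F)^[n] ⁻¹' U) ∩ V).Nonempty)
    {U V : Set (T1 × ℝ)} (hU : IsOpen U) (hV : IsOpen V) (hUne : U.Nonempty)
    (hVne : V.Nonempty) (hUC : U ⊆ C) (hVC : V ⊆ C) :
    ∃ n : ℕ, ∃ u ∈ U, (skew ω F)^[n] u ∈ V := by
  obtain ⟨m, hm⟩ := htrans U V hU hV hUne hVne hUC hVC
  rcases hm with ⟨q, ⟨u, hu, rfl⟩, hq2⟩ | ⟨v, hv1, hv2⟩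
  · exact ⟨m, u, hu, hq2⟩
  · set W : Set (T1 × ℝ) := V ∩ (skew ω F)^[m] ⁻¹' U with hW
    have hWopen : IsOpen W := hV.inter (((skew_continuous hF).iterate m).isOpen_preimage U hU)
    have hWne : W.Nonempty := ⟨v, hv2, hv1⟩
    have hWC : W ⊆ C := fun q hq => hVC hq.1
    obtain ⟨N, hNm, w, hwW, hwN⟩ := chain_return hF htrans m W hWopen hWne hWC
    refine ⟨N - m, (skew ω F)^[m] w, hwW.2, ?_⟩
    rw [← Function.iterate_add_apply]
    have : N - m + m = N := Nat.sub_add_cancel hNm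
    rw [this]
    exact hwN.1


/-! ### Uniform continuity on a compact band -/

lemma unif_cont (hF : IsQpfLift ω F) (lo₀ hi₀ : ℝ) {ε' : ℝ} (hε' : 0 < ε') :
    ∃ δ : ℝ, 0 < δ ∧ ∀ (θ : T1) (x y : ℝ), x ∈ Set.Icc lo₀ hi₀ → y ∈ Set.Icc lo₀ hi₀ →
      |x - y| ≤ δ → |F θ x - F θ y| ≤ ε' := by
  have hK : IsCompact ((Set.univ : Set T1) ×ˢ Set.Icc lo₀ hi₀) :=
    isCompact_univ.prod isCompact_Icc
  have huc := hK.uniformContinuousOn_of_continuous hF.cont.continuousOn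
  rw [Metric.uniformContinuousOn_iff_le] at huc
  obtain ⟨δ, hδ, hδ'⟩ := huc ε' hε'
  refine ⟨δ, hδ, fun θ x y hx hy hxy => ?_⟩
  have hd : dist ((θ, x) : T1 × ℝ) (θ, y) ≤ δ := by
    rw [Prod.dist_eq]
    apply max_le
    · simp only [dist_self]
      exact hδ.le
    · rw [Real.dist_eq]
      exact hxy
  have := hδ' (θ, x) ⟨Set.mem_univ _, hx⟩ (θ, y) ⟨Set.mem_univ _, hy⟩ hd
  rw [Real.dist_eq] at this
  exact this

/-! ### High points of the limit set -/

lemma limset_high_point (hω : Irrational ω) (hb : ∀ k, (o k).2 ∈ Set.Icc lo hi)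
    {θs : T1} (hfst : ∀ k, (o k).1 = θs + k • ((ω : T1)))
    {P : Set T1} (hP : IsOpen P) {θt : T1} (hθt : θt ∈ P) {c : ℝ} {N₁ : ℕ}
    (hc : ∀ k, N₁ ≤ k → (o k).1 ∈ P → c ≤ (o k).2) :
    ∃ x : ℝ, (θt, x) ∈ limset o ∧ c ≤ x := by
  set T : ℕ → Set (T1 × ℝ) := fun N => o '' {k : ℕ | N ≤ k ∧ (o k).1 ∈ P} with hT
  set D : ℕ → Set (T1 × ℝ) := fun N => closure (T N) with hD
  have hDsub : ∀ N, D N ⊆ closure (o '' Set.Ici N) := by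
    intro N
    apply closure_mono
    apply Set.image_mono
    intro k hk
    exact hk.1
  have hDcpt : ∀ N, IsCompact (D N) := by
    intro N
    exact IsCompact.of_isClosed_subset (tail_closure_isCompact hb N) isClosed_closure (hDsub N)
  have hfibne : ∀ N, (fib (D (max N N₁)) θt).Nonempty := by
    intro N
    set N' := max N N₁ with hN'
    set PN : Set T1 := Prod.fst '' D N' with hPN
    have hPNc : IsClosed PN := ((hDcpt N').image continuous_fst).isClosed
    have hθtPN : θt ∈ PN := by
      by_contra hno
      have hOopen : IsOpen (PNᶜ ∩ P) := hPNc.isOpen_compl.inter hP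
      have hOne : (PNᶜ ∩ P).Nonempty := ⟨θt, hno, hθt⟩
      obtain ⟨k, hk, hkmem⟩ := orbit_dense hω θs hOopen hOne N'
      apply hkmem.1
      refine ⟨o k, subset_closure ⟨k, ⟨hk, ?_⟩, rfl⟩, hfst k⟩
      rw [hfst k]
      exact hkmem.2
    obtain ⟨p, hp, hp1⟩ := hθtPN
    refine ⟨p.2, ?_⟩
    show (θt, p.2) ∈ D N'
    rw [← hp1]
    exact hp
  have hnest : ∀ N, fib (D (max (N + 1) N₁)) θt ⊆ fib (D (max N N₁)) θt := by
    intro N x hx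
    have hsub : D (max (N + 1) N₁) ⊆ D (max N N₁) := by
      apply closure_mono
      apply Set.image_mono
      intro k hk
      exact ⟨le_trans (by omega : max N N₁ ≤ max (N + 1) N₁) hk.1, hk.2⟩
    exact hsub hx
  obtain ⟨x, hx⟩ := IsCompact.nonempty_iInter_of_sequence_nonempty_isCompact_isClosed
    (fun N => fib (D (max N N₁)) θt) hnest hfibne (fib_isCompact (hDcpt _) θt)
    (fun N => fib_isClosed isClosed_closure θt)
  refine ⟨x, ?_, ?_⟩
  · apply Set.mem_iInter.2
    intro N
    have h1 : (θt, x) ∈ D (max N N₁) := Set.mem_iInter.1 hx N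
    have h2 := hDsub (max N N₁) h1
    exact closure_mono (Set.image_mono (Set.Ici_subset_Ici.2 (le_max_left N N₁))) h2
  · have h1 : (θt, x) ∈ D (max 0 N₁) := Set.mem_iInter.1 hx 0
    have h2 : T (max 0 N₁) ⊆ {p : T1 × ℝ | c ≤ p.2} := by
      rintro p ⟨k, ⟨hk1, hk2⟩, rfl⟩
      exact hc k (le_trans (le_max_right 0 N₁) hk1) hk2
    exact closure_minimal h2 (isClosed_le continuous_const continuous_snd) h1

end Climb

open Climb

/-- case (𝒜1)(a) of the Claim in the proof of Proposition 4.1: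
if the dynamics between two neighboring minimal invariant strips is topologically
transitive, then every `ε`-perturbed orbit starting above `A` eventually climbs above
`B`. -/
theorem transitive_case_climbing
    (ω : ℝ) (hω : Irrational ω)
    (F : T1 → ℝ → ℝ) (hF : IsQpfLift ω F)
    (ε : ℝ) (hε : 0 < ε)
    (A B : Set (T1 × ℝ))
    (hA : IsMinimalStrip ω F A) (hB : IsMinimalStrip ω F B) (hAB : StripLt A B)
    (hgap : ¬ ∃ S : Set (T1 × ℝ), IsInvStrip ω F S ∧ StripLt A S ∧ StripLt S B)
    (C : Set (T1 × ℝ))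
    (hC : C = {p : T1 × ℝ | phiSup A p.1 < p.2 ∧ p.2 < phiInf B p.1})
    (htrans : ∀ U V : Set (T1 × ℝ), IsOpen U → IsOpen V → U.Nonempty → V.Nonempty →
      U ⊆ C → V ⊆ C → ∃ n : ℕ,
        (((skew ω F)^[n] '' U) ∩ V).Nonempty ∨ (((skew ω F)^[n] ⁻¹' U) ∩ V).Nonempty) :
    ∀ (θ₀ : T1) (x₀ : ℝ), phiSup A θ₀ < x₀ →
      ∃ k : ℕ, phiSup B (θ₀ + k • (ω : T1)) <
        fiberIter ω (fun θ x => F θ x + ε) k θ₀ x₀ := by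
  subst hC
  intro θ₀ x₀ hx₀
  by_contra hcon
  push_neg at hcon
  set Fε : T1 → ℝ → ℝ := fun θ x => F θ x + ε with hFεdef
  have hFε : IsQpfLift ω Fε := qpf_eps hF ε
  set ψ : ℕ → ℝ := fun k => fiberIter ω Fε k θ₀ x₀ with hψ
  set Θ : ℕ → T1 := fun k => θ₀ + k • ((ω : T1)) with hΘ
  set o : ℕ → T1 × ℝ := fun k => (Θ k, ψ k) with ho
  have hfst : ∀ k, (o k).1 = θ₀ + k • ((ω : T1)) := fun k => rfl
  have H : ∀ k, ψ k ≤ phiSup B (Θ k) := hcon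
  have hΘsucc : ∀ k, Θ (k + 1) = Θ k + ((ω : T1)) := by
    intro k
    simp only [hΘ]
    rw [succ_nsmul]
    abel
  have hψsucc : ∀ k, ψ (k + 1) = F (Θ k) (ψ k) + ε := by
    intro k
    show fiberIter ω Fε (k + 1) θ₀ x₀ = _
    rw [fiberIter_succ']
  have hstep : ∀ k, o (k + 1) = skew ω Fε (o k) := by
    intro k
    show (Θ (k + 1), ψ (k + 1)) = (Θ k + ((ω : T1)), Fε (Θ k) (ψ k))
    rw [hΘsucc, hψsucc]
  -- the orbit stays above A
  have hA_lb : ∀ k, phiSup A (Θ k) < ψ k := by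
    intro k
    induction k with
    | zero =>
        have h0 : Θ 0 = θ₀ := by simp [hΘ]
        have h1 : ψ 0 = x₀ := rfl
        rw [h0, h1]
        exact hx₀
    | succ k ih =>
        rw [hψsucc, hΘsucc, ← phiSup_invariant hF hA.1 (Θ k)]
        have := hF.mono (Θ k) ih
        linarith
  have hA_eps : ∀ k, phiSup A (Θ (k + 1)) + ε ≤ ψ (k + 1) := by
    intro k
    rw [hψsucc, hΘsucc, ← phiSup_invariant hF hA.1 (Θ k)]
    have := (hF.mono (Θ k)).monotone (hA_lb k).le
    linarith
  -- the orbit can never enter B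
  have hcross : ∀ K, ¬ phiInf B (Θ K) ≤ ψ K := by
    intro K hK
    have hlow : ∀ j, phiInf B (Θ (K + j)) ≤ ψ (K + j) := by
      intro j
      induction j with
      | zero => simpa using hK
      | succ j ih =>
          have h1 : K + (j + 1) = (K + j) + 1 := by omega
          rw [h1, hψsucc, hΘsucc, ← phiInf_invariant hF hB.1 (Θ (K + j))]
          have := (hF.mono (Θ (K + j))).monotone ih
          linarith
    have hin : ∀ j, o (K + j) ∈ B := by
      intro j
      exact (mem_strip_iff hB.1).2 ⟨hlow j, H (K + j)⟩
    apply no_trapped_orbit hω hF hε hB (o := fun j => o (K + j)) (θs := Θ K)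
    · intro j
      show Θ (K + j) = Θ K + j • ((ω : T1))
      simp only [hΘ]
      rw [add_nsmul]
      abel
    · intro j
      show o ((K + j) + 1) = skew ω Fε (o (K + j))
      exact hstep (K + j)
    · exact hin
  have hbelow : ∀ k, ψ k < phiInf B (Θ k) := fun k => not_le.1 (hcross k)
  -- global bounds
  obtain ⟨RA, hRA, hRAbd⟩ := strip_bound hA.1
  obtain ⟨RB, hRB, hRBbd⟩ := strip_bound hB.1
  set M : ℝ := max RA RB with hM
  have hboA : ∀ θ, |phiSup A θ| ≤ M :=
    fun θ => le_trans (hRAbd _ (phiSup_mem hA.1 θ)) (le_max_left _ _)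
  have hboB : ∀ θ, |phiInf B θ| ≤ M :=
    fun θ => le_trans (hRBbd _ (phiInf_mem hB.1 θ)) (le_max_right _ _)
  have hb : ∀ k, (o k).2 ∈ Set.Icc (-M) M := by
    intro k
    constructor
    · have h1 := (abs_le.1 (hboA (Θ k))).1
      have h2 := hA_lb k
      show -M ≤ ψ k
      linarith
    · have h1 := (abs_le.1 (hboB (Θ k))).2
      have h2 := hbelow k
      show ψ k ≤ M
      linarith
  -- the limit set and its upper bounding graph
  set L : Set (T1 × ℝ) := limset o with hLdef
  have hLcpt : IsCompact L := limset_isCompact hb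
  have hLne : ∀ θ, (fib L θ).Nonempty := limset_fib_nonempty hω hb hfst
  set hfun : T1 → ℝ := fun θ => sSup (fib L θ) with hhfun
  -- a simultaneous continuity point
  set φs : Fin 3 → T1 → ℝ :=
    fun i θ => if i.val = 0 then phiSup A θ else if i.val = 1 then hfun θ
      else -(phiInf B θ) with hφs
  have hφ0 : ∀ θ, φs 0 θ = phiSup A θ := fun θ => by simp [hφs]
  have hφ1 : ∀ θ, φs 1 θ = hfun θ := fun θ => by simp [hφs]
  have hφ2 : ∀ θ, φs 2 θ = -(phiInf B θ) := fun θ => by simp [hφs]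
  have hclosed : ∀ (i : Fin 3) (c : ℝ), IsClosed {θ : T1 | c ≤ φs i θ} := by
    intro i c
    simp only [hφs]
    split_ifs with h1' h2'
    · exact isClosed_le_sSup_fib hA.1.1 (strip_fib_nonempty hA.1) c
    · exact isClosed_le_sSup_fib hLcpt hLne c
    · have h1 := isClosed_sInf_fib_le hB.1.1 (strip_fib_nonempty hB.1) (-c)
      have h2 : {θ : T1 | c ≤ -(phiInf B θ)} = {θ : T1 | sInf (fib B θ) ≤ -c} := by
        ext θ
        simp only [Set.mem_setOf_eq]
        constructor
        · intro h
          have h3 : phiInf B θ ≤ -c := by linarith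
          exact h3
        · intro h
          have h3 : phiInf B θ ≤ -c := h
          linarith
      rw [h2]
      exact h1
  obtain ⟨θc, hθc⟩ := exists_cont_pt _ hclosed
  set as : ℝ := phiSup A θc with has
  set bs : ℝ := phiInf B θc with hbs
  set hs : ℝ := hfun θc with hhs
  have hasbs : as < bs := hAB θc
  -- hs ≤ bs
  have hhs_le : hs ≤ bs := by
    by_contra hgt
    push_neg at hgt
    obtain ⟨O2, hO2open, hO2mem, hO2⟩ := hθc 2 ((hs - bs) / 2) (by linarith)
    have hO2' : ∀ θ ∈ O2, |phiInf B θ - bs| < (hs - bs) / 2 := by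
      intro θ hθ
      have := hO2 θ hθ
      rw [hφ2 θ, hφ2 θc] at this
      calc |phiInf B θ - bs| = |(-(phiInf B θ)) - (-(phiInf B θc))| := by
            rw [hbs, show (-(phiInf B θ)) - (-(phiInf B θc))
              = -(phiInf B θ - phiInf B θc) from by ring, abs_neg]
      _ < (hs - bs) / 2 := this
    have hmem : (θc, hs) ∈ L := sSup_fib_mem hLcpt (hLne θc)
    have hOopen : IsOpen (O2 ×ˢ Set.Ioi (bs + (hs - bs) / 2)) := hO2open.prod isOpen_Ioi
    have hmem2 : (θc, hs) ∈ O2 ×ˢ Set.Ioi (bs + (hs - bs) / 2) := by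
      refine ⟨hO2mem, ?_⟩
      show bs + (hs - bs) / 2 < hs
      linarith
    obtain ⟨k, -, hk⟩ := limset_visits hmem hOopen hmem2 0
    have h1 : phiInf B (Θ k) < bs + (hs - bs) / 2 := by
      have := hO2' (Θ k) hk.1
      have := abs_lt.1 this
      linarith [this.2]
    have h2 : bs + (hs - bs) / 2 < ψ k := hk.2
    have h3 := hbelow k
    linarith
  -- as + ε/2 ≤ hs
  have hhs_ge : as + ε / 2 ≤ hs := by
    obtain ⟨O0, hO0open, hO0mem, hO0⟩ := hθc 0 (ε / 4) (by linarith)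
    have hO0' : ∀ θ ∈ O0, |phiSup A θ - as| < ε / 4 := by
      intro θ hθ
      have := hO0 θ hθ
      rw [hφ0 θ, hφ0 θc] at this
      exact this
    obtain ⟨x, hxL, hxc⟩ := limset_high_point hω hb hfst hO0open hO0mem
      (c := as + 3 * ε / 4) (N₁ := 1)
      (by
        intro k hk1 hkP
        obtain ⟨k', rfl⟩ : ∃ k', k = k' + 1 := ⟨k - 1, by omega⟩
        have h1 := hA_eps k'
        have h2 := abs_lt.1 (hO0' (Θ (k' + 1)) hkP)
        show as + 3 * ε / 4 ≤ ψ (k' + 1)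
        linarith [h2.1])
    have : x ≤ hs := le_sSup_fib hLcpt hxL
    linarith
  -- uniform continuity and the scale η
  obtain ⟨δ₀, hδ₀, hUC⟩ := unif_cont hF (-M - 1) (M + 1) (show (0 : ℝ) < ε / 2 by linarith)
  set η : ℝ := min (δ₀ / 2) (min ((bs - as) / 8) (min (ε / 8) (1 / 4))) with hηdef
  have hηpos : 0 < η := by
    apply lt_min (by linarith)
    apply lt_min (by linarith)
    apply lt_min (by linarith)
    norm_num
  have hη1 : 2 * η ≤ δ₀ := by
    have := min_le_left (δ₀ / 2) (min ((bs - as) / 8) (min (ε / 8) (1 / 4)))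
    rw [← hηdef] at this
    linarith
  have hη2 : 8 * η ≤ bs - as := by
    have h1 := (min_le_right (δ₀ / 2) (min ((bs - as) / 8) (min (ε / 8) (1 / 4)))).trans
      (min_le_left ((bs - as) / 8) (min (ε / 8) (1 / 4)))
    rw [← hηdef] at h1
    linarith
  have hη3 : 8 * η ≤ ε := by
    have h1 := (min_le_right (δ₀ / 2) (min ((bs - as) / 8) (min (ε / 8) (1 / 4)))).trans
      ((min_le_right ((bs - as) / 8) (min (ε / 8) (1 / 4))).trans
        (min_le_left (ε / 8) (1 / 4)))
    rw [← hηdef] at h1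
    linarith
  have hη4 : η ≤ 1 / 4 := by
    have h1 := (min_le_right (δ₀ / 2) (min ((bs - as) / 8) (min (ε / 8) (1 / 4)))).trans
      ((min_le_right ((bs - as) / 8) (min (ε / 8) (1 / 4))).trans
        (min_le_right (ε / 8) (1 / 4)))
    rw [← hηdef] at h1
    linarith
  -- the neighbourhood N of θc
  obtain ⟨OA, hOAopen, hOAmem, hOA⟩ := hθc 0 η hηpos
  obtain ⟨Oh, hOhopen, hOhmem, hOh⟩ := hθc 1 (η / 4) (by linarith)
  obtain ⟨OB, hOBopen, hOBmem, hOB⟩ := hθc 2 η hηpos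
  set N : Set T1 := OA ∩ Oh ∩ OB with hNdef
  have hNopen : IsOpen N := (hOAopen.inter hOhopen).inter hOBopen
  have hNmem : θc ∈ N := ⟨⟨hOAmem, hOhmem⟩, hOBmem⟩
  have hNA : ∀ θ ∈ N, |phiSup A θ - as| < η := by
    intro θ hθ
    have := hOA θ hθ.1.1
    rw [hφ0 θ, hφ0 θc] at this
    exact this
  have hNh : ∀ θ ∈ N, |hfun θ - hs| < η / 4 := by
    intro θ hθ
    have := hOh θ hθ.1.2
    rw [hφ1 θ, hφ1 θc] at this
    exact this
  have hNB : ∀ θ ∈ N, |phiInf B θ - bs| < η := by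
    intro θ hθ
    have := hOB θ hθ.2
    rw [hφ2 θ, hφ2 θc] at this
    calc |phiInf B θ - bs| = |(-(phiInf B θ)) - (-(phiInf B θc))| := by
          rw [hbs, show (-(phiInf B θ)) - (-(phiInf B θc))
            = -(phiInf B θ - phiInf B θc) from by ring, abs_neg]
    _ < η := this
  -- the source and target open sets
  set c₃ : ℝ := hs - η / 2 with hc₃
  set U : Set (T1 × ℝ) :=
    {p : T1 × ℝ | p.1 ∈ N ∧ phiSup A p.1 < p.2 ∧ p.2 < c₃ ∧ p.2 < phiInf B p.1} with hUdef
  set V : Set (T1 × ℝ) :=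
    {p : T1 × ℝ | p.1 ∈ N ∧ bs - η < p.2 ∧ p.2 < phiInf B p.1} with hVdef
  have hUopen : IsOpen U := by
    have : U = (Prod.fst ⁻¹' N) ∩ ({p : T1 × ℝ | sSup (fib A p.1) < p.2} ∩
        ((Prod.snd ⁻¹' Set.Iio c₃) ∩ {p : T1 × ℝ | p.2 < sInf (fib B p.1)})) := rfl
    rw [this]
    exact (hNopen.preimage continuous_fst).inter
      ((isOpen_sSup_fib_lt hA.1.1 (strip_fib_nonempty hA.1)).inter
        ((isOpen_Iio.preimage continuous_snd).inter
          (isOpen_lt_sInf_fib hB.1.1 (strip_fib_nonempty hB.1))))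
  have hVopen : IsOpen V := by
    have : V = (Prod.fst ⁻¹' N) ∩ ((Prod.snd ⁻¹' Set.Ioi (bs - η)) ∩
        {p : T1 × ℝ | p.2 < sInf (fib B p.1)}) := rfl
    rw [this]
    exact (hNopen.preimage continuous_fst).inter
      ((isOpen_Ioi.preimage continuous_snd).inter
        (isOpen_lt_sInf_fib hB.1.1 (strip_fib_nonempty hB.1)))
  have h_as_c₃ : as < c₃ := by
    rw [hc₃]
    linarith
  have h_c₃_bs : c₃ < bs := by
    rw [hc₃]
    linarith
  have hUne : U.Nonempty := by
    refine ⟨(θc, (as + c₃) / 2), hNmem, ?_, ?_, ?_⟩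
    · show as < (as + c₃) / 2
      linarith
    · show (as + c₃) / 2 < c₃
      linarith
    · show (as + c₃) / 2 < bs
      linarith
  have hVne : V.Nonempty := by
    refine ⟨(θc, bs - η / 2), hNmem, ?_, ?_⟩
    · show bs - η < bs - η / 2
      linarith
    · show bs - η / 2 < bs
      linarith
  have hUC' : U ⊆ {p : T1 × ℝ | phiSup A p.1 < p.2 ∧ p.2 < phiInf B p.1} :=
    fun p hp => ⟨hp.2.1, hp.2.2.2⟩
  have hVC' : V ⊆ {p : T1 × ℝ | phiSup A p.1 < p.2 ∧ p.2 < phiInf B p.1} := by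
    rintro p ⟨h1, h2, h3⟩
    refine ⟨?_, h3⟩
    have h4 := abs_lt.1 (hNA p.1 h1)
    have : phiSup A p.1 < as + η := by linarith [h4.2]
    linarith
  -- forward transitivity
  obtain ⟨n, u, huU, hun⟩ := trans_up hF htrans hUopen hVopen hUne hVne hUC' hVC'
  -- continuity rectangle around u
  have hO'open : IsOpen (U ∩ (skew ω F)^[n] ⁻¹' V) :=
    hUopen.inter (((skew_continuous hF).iterate n).isOpen_preimage V hVopen)
  have huO' : u ∈ U ∩ (skew ω F)^[n] ⁻¹' V := ⟨huU, hun⟩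
  obtain ⟨W₁, W₂, hW₁, hW₂, hu1, hu2, hWsub⟩ := isOpen_prod_iff.1 hO'open u.1 u.2 (by
    simpa using huO')
  -- a visit of the orbit above u
  have hhu : u.2 < hfun u.1 := by
    have h1 : u.2 < c₃ := huU.2.2.1
    have h2 := abs_lt.1 (hNh u.1 huU.1)
    rw [hc₃] at h1
    linarith [h2.1]
  have hqL : (u.1, hfun u.1) ∈ L := sSup_fib_mem hLcpt (hLne u.1)
  have hOOopen : IsOpen (W₁ ×ˢ Set.Ioi u.2) := hW₁.prod isOpen_Ioi
  have hqOO : (u.1, hfun u.1) ∈ W₁ ×ˢ Set.Ioi u.2 := ⟨hu1, hhu⟩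
  obtain ⟨k, -, hkvisit⟩ := limset_visits hqL hOOopen hqOO 0
  have hkW₁ : Θ k ∈ W₁ := hkvisit.1
  have hkabove : u.2 < ψ k := hkvisit.2
  have hmemrect : ((Θ k, u.2) : T1 × ℝ) ∈ U ∩ (skew ω F)^[n] ⁻¹' V :=
    hWsub ⟨hkW₁, hu2⟩
  -- the landing point
  set y : ℝ := fiberIter ω F n (Θ k) u.2 with hy
  have hland : ((Θ (k + n), y) : T1 × ℝ) ∈ V := by
    have h1 := hmemrect.2
    rw [Set.mem_preimage, skew_iterate] at h1
    have hΘeq : Θ k + n • ((ω : T1)) = Θ (k + n) := by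
      simp only [hΘ]
      rw [add_nsmul]
      abel
    rwa [hΘeq] at h1
  -- domination
  have hcomp : y ≤ ψ (k + n) := by
    have h1 : ψ (k + n) = fiberIter ω Fε n (Θ k) (ψ k) := by
      show fiberIter ω Fε (k + n) θ₀ x₀ = _
      rw [fiberIter_add]
    rw [h1, hy]
    exact fiberIter_le_fiberIter (fun θ' => (hFε.mono θ').monotone)
      (fun θ' x => by
        show F θ' x ≤ F θ' x + ε
        linarith) n (Θ k) hkabove.le
  -- final contradiction
  have h1 : bs - η < y := hland.2.1
  have h2 : Θ (k + n) ∈ N := hland.1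
  have h3 : phiInf B (Θ (k + n)) < bs + η := by
    have := abs_lt.1 (hNB _ h2)
    linarith [this.2]
  have h4 : phiInf B (Θ (k + n)) - 2 * η < ψ (k + n) := by linarith
  have h5 := hbelow (k + n)
  have h6 : ψ (k + n + 1) = F (Θ (k + n)) (ψ (k + n)) + ε := hψsucc _
  have hBd1 : phiInf B (Θ (k + n)) ∈ Set.Icc (-M - 1) (M + 1) := by
    have := abs_le.1 (hboB (Θ (k + n)))
    constructor <;> [linarith [this.1]; linarith [this.2]]
  have hBd2 : phiInf B (Θ (k + n)) - 2 * η ∈ Set.Icc (-M - 1) (M + 1) := by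
    have := abs_le.1 (hboB (Θ (k + n)))
    constructor <;> [linarith [this.1, hη4]; linarith [this.2, hηpos]]
  have h7 := hUC (Θ (k + n)) (phiInf B (Θ (k + n))) (phiInf B (Θ (k + n)) - 2 * η)
    hBd1 hBd2 (by
      rw [abs_of_nonneg (by linarith : (0 : ℝ) ≤ phiInf B (Θ (k + n)) -
        (phiInf B (Θ (k + n)) - 2 * η)) ]
      linarith)
  have h8 : F (Θ (k + n)) (phiInf B (Θ (k + n))) - ε / 2
      ≤ F (Θ (k + n)) (phiInf B (Θ (k + n)) - 2 * η) := by
    have := abs_le.1 h7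
    linarith [this.2]
  have h9 : F (Θ (k + n)) (phiInf B (Θ (k + n)) - 2 * η) ≤ F (Θ (k + n)) (ψ (k + n)) :=
    (hF.mono _).monotone (by linarith)
  have h10 : phiInf B (Θ (k + n + 1)) = F (Θ (k + n)) (phiInf B (Θ (k + n))) := by
    rw [hΘsucc]
    exact (phiInf_invariant hF hB.1 _).symm
  have hfinal : phiInf B (Θ (k + n + 1)) < ψ (k + n + 1) := by
    rw [h6, h10]
    linarith
  exact absurd (hbelow (k + n + 1)) (not_lt.2 hfinal.le)
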